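/- For ν > 1/2 and x ≥ 0, the Bessel function ratio satisfies x/(ν + sqrt(ν² + x²)) ≤ h_ν(x) ≤ x/((2ν−1)/2 + sqrt((2ν−1)²/4 + x²)). -/

import Mathlib

/-- Modified Bessel function of the first kind of order `ν`. -/
noncomputable def besselI (ν x : ℝ) : ℝ :=
  ∑' k : ℕ, (x / 2) ^ (2 * (k : ℝ) + ν) / (k.factorial * Real.Gamma ((k : ℝ) + ν + 1))

/-- Ratio `h_ν(x) = I_ν(x) / I_{ν-1}(x)`. -/
noncomputable def besselRatio (ν x : ℝ) : ℝ := besselI ν x / besselI (ν - 1) x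

set_option maxHeartbeats 1000000
open Real Finset

noncomputable def dfact (x : ℝ) : ℕ → ℝ
  | 0 => 1
  | n+1 => dfact x n * (x - n)

@[simp] lemma dfact_zero (x : ℝ) : dfact x 0 = 1 := rfl
lemma dfact_succ (x : ℝ) (n : ℕ) : dfact x (n+1) = dfact x n * (x - n) := rfl

lemma dfact_vandermonde (x y : ℝ) : ∀ n : ℕ,
    dfact (x + y) n = ∑ j ∈ range (n+1), (n.choose j : ℝ) * dfact x j * dfact y (n-j) := by
  intro n
  induction n with
  | zero => simp [dfact]
  | succ n ih =>
    rw [dfact_succ, ih, Finset.sum_mul]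
    have key : ∀ j ∈ range (n+1),
        (n.choose j : ℝ) * dfact x j * dfact y (n-j) * (x + y - n)
        = (n.choose j : ℝ) * dfact x (j+1) * dfact y (n-j)
          + (n.choose j : ℝ) * dfact x j * dfact y (n-j+1) := by
      intro j hj
      have hj' : j ≤ n := Nat.lt_succ_iff.mp (mem_range.mp hj)
      have h3 : ((n - j : ℕ) : ℝ) = (n : ℝ) - j := by push_cast [hj']; ring
      rw [dfact_succ, dfact_succ, h3]; ring
    rw [Finset.sum_congr rfl key, Finset.sum_add_distrib]
    rw [Finset.sum_range_succ' (fun j => (((n+1).choose j : ℝ)) * dfact x j * dfact y (n+1-j)) (n+1)]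
    have e1 : ∀ j ∈ range (n+1),
        (((n+1).choose (j+1) : ℝ)) * dfact x (j+1) * dfact y (n+1-(j+1))
        = (n.choose j : ℝ) * dfact x (j+1) * dfact y (n-j)
          + (n.choose (j+1) : ℝ) * dfact x (j+1) * dfact y (n-j) := by
      intro j hj
      have h5 : n+1-(j+1) = n-j := by omega
      rw [h5, Nat.choose_succ_succ, Nat.cast_add]; ring
    rw [Finset.sum_congr rfl e1, Finset.sum_add_distrib]
    have e2 : ∑ j ∈ range (n+1), (n.choose j : ℝ) * dfact x j * dfact y (n-j+1)
        = ∑ j ∈ range (n+1), (n.choose (j+1) : ℝ) * dfact x (j+1) * dfact y (n-j)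
          + ((n+1).choose 0 : ℝ) * dfact x 0 * dfact y (n+1-0) := by
      rw [Finset.sum_range_succ' (fun j => (n.choose j : ℝ) * dfact x j * dfact y (n-j+1)) n,
        Finset.sum_range_succ (fun j => (n.choose (j+1) : ℝ) * dfact x (j+1) * dfact y (n-j))]
      simp only [Nat.choose_succ_self, Nat.cast_zero, zero_mul, add_zero, Nat.choose_zero_right,
        Nat.cast_one, dfact_zero, Nat.sub_zero, one_mul]
      congr 1
      refine Finset.sum_congr rfl fun j hj => ?_
      have hj' : j < n := mem_range.mp hj
      have h6 : n - (j+1) + 1 = n - j := by omega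
      rw [h6]
    rw [e2]; ring

lemma Gamma_add_nat : ∀ (n : ℕ) (t : ℝ), 0 < t →
    Real.Gamma (t + n) = dfact (t + n - 1) n * Real.Gamma t := by
  intro n
  induction n with
  | zero => intro t ht; simp
  | succ n ih =>
    intro t ht
    have h1 : t + (n+1 : ℕ) = (t + 1) + n := by push_cast; ring
    rw [h1, ih (t+1) (by linarith)]
    have h2 : Real.Gamma (t + 1) = t * Real.Gamma t := Real.Gamma_add_one (ne_of_gt ht)
    have h4 : t + 1 + (n:ℝ) - 1 = t + n := by ring
    rw [h2, h4, dfact_succ]; ring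

noncomputable def Sterm (y α : ℝ) (k : ℕ) : ℝ :=
  y^k / (k.factorial * Real.Gamma ((k:ℝ) + α + 1))

noncomputable def Sfun (y α : ℝ) : ℝ := ∑' k, Sterm y α k

lemma arg_pos {α : ℝ} (hα : -1 < α) (k : ℕ) : 0 < (k:ℝ) + α + 1 := by
  have : (0:ℝ) ≤ k := Nat.cast_nonneg k
  linarith

lemma Sterm_pos {y α : ℝ} (hy : 0 < y) (hα : -1 < α) (k : ℕ) : 0 < Sterm y α k := by
  apply div_pos (pow_pos hy k)
  exact mul_pos (by exact_mod_cast k.factorial_pos) (Real.Gamma_pos_of_pos (arg_pos hα k))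

lemma Sterm_nonneg {y α : ℝ} (hy : 0 ≤ y) (hα : -1 < α) (k : ℕ) : 0 ≤ Sterm y α k := by
  apply div_nonneg (pow_nonneg hy k)
  exact le_of_lt (mul_pos (by exact_mod_cast k.factorial_pos) (Real.Gamma_pos_of_pos (arg_pos hα k)))

lemma Sterm_succ {y α : ℝ} (hα : -1 < α) (k : ℕ) :
    Sterm y α (k+1) = Sterm y α k * (y / (((k:ℝ)+1) * ((k:ℝ) + α + 1))) := by
  have hk := arg_pos hα k
  have hG : Real.Gamma (((k+1:ℕ):ℝ) + α + 1) = ((k:ℝ) + α + 1) * Real.Gamma ((k:ℝ) + α + 1) := by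
    have : ((k+1:ℕ):ℝ) + α + 1 = ((k:ℝ) + α + 1) + 1 := by push_cast; ring
    rw [this, Real.Gamma_add_one (ne_of_gt hk)]
  have hGpos := Real.Gamma_pos_of_pos hk
  have hfac : ((k+1).factorial : ℝ) = ((k:ℝ)+1) * k.factorial := by
    rw [Nat.factorial_succ]; push_cast; ring
  have hfacpos : (0:ℝ) < k.factorial := by exact_mod_cast k.factorial_pos
  rw [Sterm, Sterm, hG, hfac, pow_succ]
  rw [div_mul_div_comm, div_eq_div_iff (by positivity) (by positivity)]
  ring

lemma Sterm_summable {y α : ℝ} (hy : 0 ≤ y) (hα : -1 < α) : Summable (Sterm y α) := by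
  apply summable_of_ratio_norm_eventually_le (r := 1/2) (by norm_num)
  filter_upwards [Filter.eventually_ge_atTop (⌈max (2*y) (-α)⌉₊)] with k hk
  have hk' : max (2*y) (-α) ≤ (k:ℝ) := le_trans (Nat.le_ceil _) (by exact_mod_cast hk)
  have h1 : 2*y ≤ (k:ℝ) := le_trans (le_max_left _ _) hk'
  have h2 : -α ≤ (k:ℝ) := le_trans (le_max_right _ _) hk'
  have hkα : 1 ≤ (k:ℝ) + α + 1 := by linarith
  have hkp : (0:ℝ) < (k:ℝ) + 1 := by positivity
  have hratio : y / (((k:ℝ)+1) * ((k:ℝ) + α + 1)) ≤ 1/2 := by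
    rw [div_le_iff₀ (by nlinarith)]
    nlinarith
  have hS := Sterm_nonneg hy hα k
  rw [Sterm_succ hα k, norm_mul, Real.norm_eq_abs, Real.norm_eq_abs, abs_of_nonneg hS,
    abs_of_nonneg (by positivity : (0:ℝ) ≤ y / (((k:ℝ)+1) * ((k:ℝ) + α + 1)))]
  calc Sterm y α k * (y / (((k:ℝ)+1) * ((k:ℝ) + α + 1))) ≤ Sterm y α k * (1/2) :=
        mul_le_mul_of_nonneg_left hratio hS
    _ = 1/2 * Sterm y α k := by ring

lemma Sfun_pos {y α : ℝ} (hy : 0 < y) (hα : -1 < α) : 0 < Sfun y α :=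
  Summable.tsum_pos (Sterm_summable (le_of_lt hy) hα) (fun k => le_of_lt (Sterm_pos hy hα k)) 0
    (Sterm_pos hy hα 0)

lemma Sterm_norm_summable {y α : ℝ} (hy : 0 ≤ y) (hα : -1 < α) :
    Summable (fun k => ‖Sterm y α k‖) := by
  have := Sterm_summable hy hα
  refine this.congr fun k => ?_
  rw [Real.norm_eq_abs, abs_of_nonneg (Sterm_nonneg hy hα k)]

noncomputable def Acoef (α β : ℝ) (n : ℕ) : ℝ :=
  ∑ j ∈ Finset.range (n+1),
    1 / ((j.factorial : ℝ) * ((n-j).factorial : ℝ) * Real.Gamma ((j:ℝ) + α + 1)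
      * Real.Gamma (((n-j:ℕ):ℝ) + β + 1))

lemma Sterm_mul_inner {y α β : ℝ} (hy : 0 ≤ y) (n : ℕ) :
    ∑ j ∈ Finset.range (n+1), Sterm y α j * Sterm y β (n-j) = y^n * Acoef α β n := by
  rw [Acoef, Finset.mul_sum]
  refine Finset.sum_congr rfl fun j hj => ?_
  have hj' : j ≤ n := Nat.lt_succ_iff.mp (Finset.mem_range.mp hj)
  have hpow : y^j * y^(n-j) = y^n := by
    rw [← pow_add]; congr 1; omega
  rw [Sterm, Sterm, div_mul_div_comm, hpow]
  rw [mul_one_div]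
  congr 1
  ring

lemma Sfun_mul {y α β : ℝ} (hy : 0 ≤ y) (hα : -1 < α) (hβ : -1 < β) :
    Sfun y α * Sfun y β = ∑' n, y^n * Acoef α β n := by
  rw [Sfun, Sfun, tsum_mul_tsum_eq_tsum_sum_range_of_summable_norm
    (Sterm_norm_summable hy hα) (Sterm_norm_summable hy hβ)]
  exact tsum_congr fun n => Sterm_mul_inner hy n

lemma Acoef_summable {y α β : ℝ} (hy : 0 ≤ y) (hα : -1 < α) (hβ : -1 < β) :
    Summable (fun n => y^n * Acoef α β n) := by
  have := (summable_norm_sum_mul_range_of_summable_norm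
    (Sterm_norm_summable hy hα) (Sterm_norm_summable hy hβ)).of_norm
  refine this.congr fun n => Sterm_mul_inner hy n

lemma Acoef_closed {α β : ℝ} (hα : -1/2 < α) (hβ : -1/2 < β) (n : ℕ) :
    Acoef α β n = Real.Gamma (α + β + 2*n + 1) /
      ((n.factorial : ℝ) * Real.Gamma (α + n + 1) * Real.Gamma (β + n + 1)
        * Real.Gamma (α + β + n + 1)) := by
  have hαn : (0:ℝ) < α + n + 1 := by have : (0:ℝ) ≤ n := Nat.cast_nonneg n; linarith
  have hβn : (0:ℝ) < β + n + 1 := by have : (0:ℝ) ≤ n := Nat.cast_nonneg n; linarith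
  have habn : (0:ℝ) < α + β + n + 1 := by have : (0:ℝ) ≤ n := Nat.cast_nonneg n; linarith
  have key : ∀ j ∈ Finset.range (n+1),
      1 / ((j.factorial : ℝ) * ((n-j).factorial : ℝ) * Real.Gamma ((j:ℝ) + α + 1)
        * Real.Gamma (((n-j:ℕ):ℝ) + β + 1))
      = (n.choose j : ℝ) * dfact (β+n) j * dfact (α+n) (n-j)
        / ((n.factorial : ℝ) * Real.Gamma (α + n + 1) * Real.Gamma (β + n + 1)) := by
    intro j hj
    have hj' : j ≤ n := Nat.lt_succ_iff.mp (Finset.mem_range.mp hj)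
    have hcast : ((n-j:ℕ):ℝ) = (n:ℝ) - j := by push_cast [hj']; ring
    have hjα : (0:ℝ) < (j:ℝ) + α + 1 := by have : (0:ℝ) ≤ j := Nat.cast_nonneg j; linarith
    have hjβ : (0:ℝ) < ((n-j:ℕ):ℝ) + β + 1 := by
      have : (0:ℝ) ≤ ((n-j:ℕ):ℝ) := Nat.cast_nonneg _; linarith
    -- Γ(α+n+1) = dfact (α+n) (n-j) * Γ(j+α+1)
    have hA : Real.Gamma (α + n + 1) = dfact (α+n) (n-j) * Real.Gamma ((j:ℝ) + α + 1) := by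
      have := Gamma_add_nat (n-j) ((j:ℝ) + α + 1) hjα
      rw [hcast] at this
      have e1 : (j:ℝ) + α + 1 + ((n:ℝ) - j) = α + n + 1 := by ring
      have e2 : (j:ℝ) + α + 1 + ((n:ℝ) - j) - 1 = α + n := by ring
      rw [e2] at this; rw [e1] at this
      exact this
    -- Γ(β+n+1) = dfact (β+n) j * Γ((n-j)+β+1)
    have hB : Real.Gamma (β + n + 1) = dfact (β+n) j * Real.Gamma (((n-j:ℕ):ℝ) + β + 1) := by
      have := Gamma_add_nat j (((n-j:ℕ):ℝ) + β + 1) hjβ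
      rw [hcast] at this
      have e1 : (n:ℝ) - j + β + 1 + (j:ℝ) = β + n + 1 := by ring
      have e2 : (n:ℝ) - j + β + 1 + (j:ℝ) - 1 = β + n := by ring
      rw [e2] at this; rw [e1] at this
      rw [hcast]
      exact this
    have hfac : (n.factorial : ℝ) = (n.choose j : ℝ) * j.factorial * (n-j).factorial := by
      rw [← Nat.choose_mul_factorial_mul_factorial hj']; push_cast; ring
    have hGA := Real.Gamma_pos_of_pos hjα
    have hGB := Real.Gamma_pos_of_pos hjβ
    have hfj : (0:ℝ) < j.factorial := by exact_mod_cast j.factorial_pos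
    have hfnj : (0:ℝ) < (n-j).factorial := by exact_mod_cast (n-j).factorial_pos
    have hch : (0:ℝ) < (n.choose j : ℝ) := by exact_mod_cast Nat.choose_pos hj'
    have hGAn := Real.Gamma_pos_of_pos hαn
    have hGBn := Real.Gamma_pos_of_pos hβn
    have hfn : (0:ℝ) < n.factorial := by exact_mod_cast n.factorial_pos
    rw [div_eq_div_iff (by positivity) (by positivity)]
    rw [hA, hB, hfac]
    ring
  rw [Acoef, Finset.sum_congr rfl key, ← Finset.sum_div, ← dfact_vandermonde]
  have e3 : β + (n:ℝ) + (α + n) = α + β + 2*n := by push_cast; ring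
  rw [e3]
  have hD : Real.Gamma (α + β + 2*(n:ℝ) + 1) = dfact (α+β+2*n) n * Real.Gamma (α + β + n + 1) := by
    have := Gamma_add_nat n (α + β + (n:ℝ) + 1) habn
    have e1 : α + β + (n:ℝ) + 1 + (n:ℝ) = α + β + 2*n + 1 := by ring
    have e2 : α + β + (n:ℝ) + 1 + (n:ℝ) - 1 = α + β + 2*n := by ring
    rw [e2] at this; rw [e1] at this
    exact this
  rw [hD]
  have hGab := Real.Gamma_pos_of_pos habn
  have hGAn := Real.Gamma_pos_of_pos hαn
  have hGBn := Real.Gamma_pos_of_pos hβn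
  have hfn : (0:ℝ) < n.factorial := by exact_mod_cast n.factorial_pos
  rw [div_eq_div_iff (by positivity) (by positivity)]
  ring

section coef
variable {ν : ℝ} (hν : 1/2 < ν) (n : ℕ)

lemma Acoef_diff (hν : 1/2 < ν) (n : ℕ) :
    Acoef ν ν n - Acoef (ν-1) (ν+1) n
      = Real.Gamma (2*ν+2*n+1) / ((n.factorial : ℝ) * Real.Gamma (2*ν+n+1)
          * (Real.Gamma (ν+n+1) * Real.Gamma (ν+n+2))) := by
  have hn0 : (0:ℝ) ≤ n := Nat.cast_nonneg n
  have hνn : (0:ℝ) < ν + n := by linarith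
  have h1 := Acoef_closed (by linarith : -1/2 < ν) (by linarith : -1/2 < ν) n
  have h2 := Acoef_closed (by linarith : -1/2 < ν - 1) (by linarith : -1/2 < ν + 1) n
  rw [show ν + ν + 2*(n:ℝ) + 1 = 2*ν+2*n+1 by ring, show ν + ν + (n:ℝ) + 1 = 2*ν+n+1 by ring]
    at h1
  rw [show ν - 1 + (ν+1) + 2*(n:ℝ) + 1 = 2*ν+2*n+1 by ring,
    show ν - 1 + (ν+1) + (n:ℝ) + 1 = 2*ν+n+1 by ring,
    show ν - 1 + (n:ℝ) + 1 = ν + n by ring,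
    show ν + 1 + (n:ℝ) + 1 = ν + n + 2 by ring] at h2
  rw [h1, h2]
  have e1 : Real.Gamma (ν+n+1) = (ν+n) * Real.Gamma (ν+n) := by
    rw [show ν+(n:ℝ)+1 = (ν+n)+1 by ring, Real.Gamma_add_one (ne_of_gt hνn)]
  have e2 : Real.Gamma (ν+n+2) = (ν+n+1) * Real.Gamma (ν+n+1) := by
    rw [show ν+(n:ℝ)+2 = (ν+n+1)+1 by ring, Real.Gamma_add_one (by linarith)]
  have hg := Real.Gamma_pos_of_pos hνn
  have hg1 := Real.Gamma_pos_of_pos (show (0:ℝ) < ν+n+1 by linarith)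
  have hg2 := Real.Gamma_pos_of_pos (show (0:ℝ) < ν+n+2 by linarith)
  have hgt := Real.Gamma_pos_of_pos (show (0:ℝ) < 2*ν+2*n+1 by linarith)
  have hgs := Real.Gamma_pos_of_pos (show (0:ℝ) < 2*ν+n+1 by linarith)
  have hfn : (0:ℝ) < n.factorial := by exact_mod_cast n.factorial_pos
  rw [div_sub_div _ _ (by positivity) (by positivity), div_eq_div_iff (by positivity) (by positivity)]
  rw [e2, e1]
  ring

lemma Acoef_turan (hν : 1/2 < ν) (n : ℕ) : Acoef (ν-1) (ν+1) n ≤ Acoef ν ν n := by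
  have h := Acoef_diff hν n
  have hn0 : (0:ℝ) ≤ n := Nat.cast_nonneg n
  have hgt := Real.Gamma_pos_of_pos (show (0:ℝ) < 2*ν+2*n+1 by linarith)
  have hgs := Real.Gamma_pos_of_pos (show (0:ℝ) < 2*ν+n+1 by linarith)
  have hg1 := Real.Gamma_pos_of_pos (show (0:ℝ) < ν+n+1 by linarith)
  have hg2 := Real.Gamma_pos_of_pos (show (0:ℝ) < ν+n+2 by linarith)
  have hfn : (0:ℝ) < n.factorial := by exact_mod_cast n.factorial_pos
  nlinarith [div_pos hgt (by positivity : (0:ℝ) < (n.factorial : ℝ) * Real.Gamma (2*ν+n+1)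
    * (Real.Gamma (ν+n+1) * Real.Gamma (ν+n+2)))]

lemma Acoef_key (hν : 1/2 < ν) (n : ℕ) :
    2 * (Acoef ν ν n - Acoef (ν-1) (ν+1) n) ≤ Acoef ν (ν-1) (n+1) := by
  have hn0 : (0:ℝ) ≤ n := Nat.cast_nonneg n
  have h := Acoef_diff hν n
  have h2 := Acoef_closed (by linarith : -1/2 < ν) (by linarith : -1/2 < ν - 1) (n+1)
  rw [show ν + (ν-1) + 2*((n+1:ℕ):ℝ) + 1 = 2*ν+2*n+2 by push_cast; ring,
    show ν + (ν-1) + ((n+1:ℕ):ℝ) + 1 = 2*ν+n+1 by push_cast; ring,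
    show ν + ((n+1:ℕ):ℝ) + 1 = ν+n+2 by push_cast; ring,
    show ν - 1 + ((n+1:ℕ):ℝ) + 1 = ν+n+1 by push_cast; ring] at h2
  rw [h, h2]
  have e3 : Real.Gamma (2*ν+2*n+2) = (2*ν+2*n+1) * Real.Gamma (2*ν+2*n+1) := by
    rw [show 2*ν+2*(n:ℝ)+2 = (2*ν+2*n+1)+1 by ring, Real.Gamma_add_one (by linarith)]
  have hfn1 : ((n+1).factorial : ℝ) = ((n:ℝ)+1) * n.factorial := by
    rw [Nat.factorial_succ]; push_cast; ring
  have hgt := Real.Gamma_pos_of_pos (show (0:ℝ) < 2*ν+2*n+1 by linarith)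
  have hgs := Real.Gamma_pos_of_pos (show (0:ℝ) < 2*ν+n+1 by linarith)
  have hg1 := Real.Gamma_pos_of_pos (show (0:ℝ) < ν+n+1 by linarith)
  have hg2 := Real.Gamma_pos_of_pos (show (0:ℝ) < ν+n+2 by linarith)
  have hfn : (0:ℝ) < n.factorial := by exact_mod_cast n.factorial_pos
  rw [e3, hfn1, mul_div_assoc']
  rw [div_le_div_iff₀ (by positivity) (by positivity)]
  have hP : (0:ℝ) < Real.Gamma (2*ν+2*n+1) * ((n.factorial:ℝ) * Real.Gamma (2*ν+n+1)
      * (Real.Gamma (ν+n+1) * Real.Gamma (ν+n+2))) := by positivity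
  have hcoef : 2*((n:ℝ)+1) ≤ 2*ν+2*n+1 := by linarith
  nlinarith [mul_le_mul_of_nonneg_right hcoef hP.le]
end coef

lemma Sfun_rec {y ν : ℝ} (hy : 0 ≤ y) (hν : 1/2 < ν) :
    Sfun y (ν-1) = ν * Sfun y ν + y * Sfun y (ν+1) := by
  have hν1 : (-1:ℝ) < ν - 1 := by linarith
  have hν0 : (-1:ℝ) < ν := by linarith
  have hν2 : (-1:ℝ) < ν + 1 := by linarith
  set g : ℕ → ℝ := fun k => match k with
    | 0 => 0
    | (k+1) => y * Sterm y (ν+1) k with hg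
  have hgsucc : ∀ k, g (k+1) = y * Sterm y (ν+1) k := fun k => rfl
  have hgsum : Summable g := by
    rw [← summable_nat_add_iff 1]
    exact ((Sterm_summable hy hν2).mul_left y).congr fun k => (hgsucc k).symm
  have htg : ∑' k, g k = y * Sfun y (ν+1) := by
    rw [Summable.tsum_eq_zero_add hgsum]
    simp only [hgsucc]
    show 0 + _ = _
    rw [zero_add, tsum_mul_left, Sfun]
  have hterm : ∀ k, Sterm y (ν-1) k = ν * Sterm y ν k + g k := by
    intro k
    match k with
    | 0 =>
      simp only [hg]
      rw [Sterm, Sterm]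
      have e0 : ((0:ℕ):ℝ) + (ν-1) + 1 = ν := by push_cast; ring
      have e1 : ((0:ℕ):ℝ) + ν + 1 = ν + 1 := by push_cast; ring
      rw [e0, e1, Real.Gamma_add_one (by linarith : ν ≠ 0)]
      have hG := Real.Gamma_pos_of_pos (show (0:ℝ) < ν by linarith)
      simp only [pow_zero, Nat.factorial_zero, Nat.cast_one, one_mul]
      rw [div_eq_iff (by positivity)]
      field_simp
      ring
    | (k+1) =>
      rw [hgsucc k, Sterm, Sterm, Sterm]
      have hkν : (0:ℝ) < (k:ℝ) + ν + 1 := by have : (0:ℝ) ≤ k := Nat.cast_nonneg k; linarith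
      have e0 : ((k+1:ℕ):ℝ) + (ν-1) + 1 = (k:ℝ) + ν + 1 := by push_cast; ring
      have e1 : ((k+1:ℕ):ℝ) + ν + 1 = ((k:ℝ) + ν + 1) + 1 := by push_cast; ring
      have e2 : ((k:ℕ):ℝ) + (ν+1) + 1 = ((k:ℝ) + ν + 1) + 1 := by push_cast; ring
      rw [e0, e1, e2, Real.Gamma_add_one (ne_of_gt hkν)]
      have hG := Real.Gamma_pos_of_pos hkν
      have hfk : (0:ℝ) < k.factorial := by exact_mod_cast k.factorial_pos
      have hfac : ((k+1).factorial : ℝ) = ((k:ℝ)+1) * k.factorial := by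
        rw [Nat.factorial_succ]; push_cast; ring
      rw [hfac, pow_succ]
      rw [div_eq_iff (by positivity)]
      field_simp
      ring
  rw [Sfun, tsum_congr hterm, Summable.tsum_add ((Sterm_summable hy hν0).mul_left ν) hgsum,
    tsum_mul_left, htg, Sfun, Sfun]

lemma besselI_eq {ν x : ℝ} (hx : 0 < x) :
    besselI ν x = (x/2) ^ ν * Sfun ((x/2)^2) ν := by
  have hq : (0:ℝ) < x/2 := by linarith
  rw [besselI, Sfun, ← tsum_mul_left]
  refine tsum_congr fun k => ?_
  rw [Sterm, ← mul_div_assoc]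
  congr 1
  rw [show 2*(k:ℝ) + ν = ν + ((2*k : ℕ):ℝ) by push_cast; ring,
    Real.rpow_add hq, Real.rpow_natCast, pow_mul]

lemma besselI_zero {ν : ℝ} (hν : 0 < ν) : besselI ν 0 = 0 := by
  rw [besselI]
  convert tsum_zero with k
  rw [show (0:ℝ)/2 = 0 by norm_num, Real.zero_rpow, zero_div]
  have : (0:ℝ) ≤ 2*(k:ℝ) := by positivity
  intro h
  rw [← h] at hν
  linarith

theorem besselRatio_bounds' (ν x : ℝ) (hν : 1 / 2 < ν) (hx : 0 ≤ x) :
    x / (ν + Real.sqrt (ν ^ 2 + x ^ 2)) ≤ (besselI ν x / besselI (ν-1) x) ∧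
      (besselI ν x / besselI (ν-1) x) ≤ x / ((2 * ν - 1) / 2 + Real.sqrt ((2 * ν - 1) ^ 2 / 4 + x ^ 2)) := by
  rcases eq_or_lt_of_le hx with heq | hxpos
  · rw [← heq, besselI_zero (by linarith), zero_div, zero_div, zero_div]
    exact ⟨le_refl 0, le_refl 0⟩
  · have hq : (0:ℝ) < x/2 := by linarith
    set q : ℝ := x/2 with hqdef
    set y : ℝ := q^2 with hydef
    have hy : 0 < y := by positivity
    have hxy : x^2 = 4*y := by rw [hydef, hqdef]; ring
    have hx2q : x = 2*q := by rw [hqdef]; ring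
    have hν1 : (-1:ℝ) < ν - 1 := by linarith
    have hν0 : (-1:ℝ) < ν := by linarith
    have hν2 : (-1:ℝ) < ν + 1 := by linarith
    have hh1 : (-1:ℝ)/2 < ν - 1 := by linarith
    have hh0 : (-1:ℝ)/2 < ν := by linarith
    have hh2 : (-1:ℝ)/2 < ν + 1 := by linarith
    set S1 : ℝ := Sfun y (ν-1) with hS1def
    set S0 : ℝ := Sfun y ν with hS0def
    set S2 : ℝ := Sfun y (ν+1) with hS2def
    have hS1 : 0 < S1 := Sfun_pos hy hν1
    have hS0 : 0 < S0 := Sfun_pos hy hν0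
    have hS2 : 0 < S2 := Sfun_pos hy hν2
    have hrec : S1 = ν * S0 + y * S2 := Sfun_rec hy.le hν
    have hI : S1 * S2 ≤ S0 * S0 := by
      rw [hS1def, hS2def, hS0def, Sfun_mul hy.le hν1 hν2, Sfun_mul hy.le hν0 hν0]
      exact Summable.tsum_le_tsum
        (fun n => mul_le_mul_of_nonneg_left (Acoef_turan hν n) (pow_nonneg hy.le n))
        (Acoef_summable hy.le hν1 hν2) (Acoef_summable hy.le hν0 hν0)
    have hII : 2*y*(S0*S0 - S1*S2) ≤ S0*S1 := by
      have hd : S0*S0 - S1*S2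
          = ∑' n, (y^n * Acoef ν ν n - y^n * Acoef (ν-1) (ν+1) n) := by
        rw [hS1def, hS2def, hS0def, Sfun_mul hy.le hν0 hν0, Sfun_mul hy.le hν1 hν2,
          Summable.tsum_sub (Acoef_summable hy.le hν0 hν0) (Acoef_summable hy.le hν1 hν2)]
      have lhs_eq : 2*y*(S0*S0 - S1*S2)
          = ∑' n, 2*y^(n+1)*(Acoef ν ν n - Acoef (ν-1) (ν+1) n) := by
        rw [hd, ← tsum_mul_left]
        exact tsum_congr fun n => by ring
      have rhs_eq : S0*S1 = Acoef ν (ν-1) 0 + ∑' n, y^(n+1) * Acoef ν (ν-1) (n+1) := by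
        rw [hS1def, hS0def, Sfun_mul hy.le hν0 hν1,
          Summable.tsum_eq_zero_add (Acoef_summable hy.le hν0 hν1), pow_zero, one_mul]
      rw [lhs_eq, rhs_eq]
      have hsum1 : Summable (fun n => 2*y^(n+1)*(Acoef ν ν n - Acoef (ν-1) (ν+1) n)) := by
        have := ((Acoef_summable hy.le hν0 hν0).sub (Acoef_summable hy.le hν1 hν2)).mul_left (2*y)
        exact this.congr fun n => by ring
      have hsum2 : Summable (fun n => y^(n+1) * Acoef ν (ν-1) (n+1)) :=
        (summable_nat_add_iff (f := fun m => y^m * Acoef ν (ν-1) m) 1).mpr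
          (Acoef_summable hy.le hν0 hν1)
      have hle : ∀ n, 2*y^(n+1)*(Acoef ν ν n - Acoef (ν-1) (ν+1) n)
          ≤ y^(n+1)*Acoef ν (ν-1) (n+1) := by
        intro n
        have hyn : (0:ℝ) ≤ y^(n+1) := by positivity
        nlinarith [mul_le_mul_of_nonneg_left (Acoef_key hν n) hyn]
      have hA0 : 0 ≤ Acoef ν (ν-1) 0 := by
        rw [Acoef_closed hh0 hh1]
        have g1 := Real.Gamma_pos_of_pos (show (0:ℝ) < ν + (ν-1) + 2*(0:ℕ) + 1 by push_cast; linarith)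
        have g2 := Real.Gamma_pos_of_pos (show (0:ℝ) < ν + (0:ℕ) + 1 by push_cast; linarith)
        have g3 := Real.Gamma_pos_of_pos (show (0:ℝ) < (ν-1) + (0:ℕ) + 1 by push_cast; linarith)
        have g4 := Real.Gamma_pos_of_pos (show (0:ℝ) < ν + (ν-1) + (0:ℕ) + 1 by push_cast; linarith)
        have f0 : (0:ℝ) < (Nat.factorial 0 : ℝ) := by norm_num [Nat.factorial]
        positivity
      calc ∑' n, 2*y^(n+1)*(Acoef ν ν n - Acoef (ν-1) (ν+1) n)
          ≤ ∑' n, y^(n+1)*Acoef ν (ν-1) (n+1) := Summable.tsum_le_tsum hle hsum1 hsum2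
        _ ≤ Acoef ν (ν-1) 0 + ∑' n, y^(n+1)*Acoef ν (ν-1) (n+1) := le_add_of_nonneg_left hA0
    -- ratio formula
    have hbr : besselI ν x / besselI (ν-1) x = q * S0 / S1 := by
      rw [besselI_eq hxpos, besselI_eq hxpos]
      have hpow : (x/2:ℝ) ^ ν = (x/2) ^ (ν-1) * (x/2) := by
        rw [show ν = (ν-1)+1 by ring]
        rw [Real.rpow_add hq, Real.rpow_one]
        rw [hqdef]
        ring_nf
      rw [hpow, ← hqdef]
      rw [mul_assoc, mul_div_mul_left _ _ (ne_of_gt (Real.rpow_pos_of_pos hq (ν-1)))]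
    rw [hbr]
    constructor
    · -- lower bound
      have hR := Real.sqrt_nonneg (ν^2 + x^2)
      have hRsq : (Real.sqrt (ν^2+x^2))^2 = ν^2 + x^2 := Real.sq_sqrt (by positivity)
      set R : ℝ := Real.sqrt (ν^2+x^2)
      have hD : 0 < ν + R := by linarith
      have hsub : S1 - ν*S0 = y*S2 := by linarith
      have key1 : 2*S1 - ν*S0 ≤ S0 * R := by
        rcases le_or_gt (2*S1 - ν*S0) 0 with h | h
        · exact le_trans h (by positivity)
        · have h1 : S1*(S1 - ν*S0) = y*(S1*S2) := by rw [hsub]; ring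
          have h2 : y*(S1*S2) ≤ y*(S0*S0) := mul_le_mul_of_nonneg_left hI hy.le
          have hsq : (2*S1 - ν*S0)^2 ≤ (S0*R)^2 := by
            rw [mul_pow, hRsq]
            nlinarith [h1, h2, hxy]
          nlinarith [hsq, h, mul_nonneg hS0.le hR]
      rw [div_le_iff₀ hD, div_mul_eq_mul_div, le_div_iff₀ hS1]
      nlinarith [mul_le_mul_of_nonneg_left key1 hq.le]
    · -- upper bound
      obtain ⟨b, hbdef⟩ : ∃ b : ℝ, b = ν - 1/2 := ⟨_, rfl⟩
      have hb : 0 < b := by rw [hbdef]; linarith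
      rw [show (2*ν-1)/2 = b by rw [hbdef]; ring, show (2*ν-1)^2/4 = b^2 by rw [hbdef]; ring]
      have hRb := Real.sqrt_nonneg (b^2 + x^2)
      have hRbsq : (Real.sqrt (b^2+x^2))^2 = b^2 + x^2 := Real.sq_sqrt (by positivity)
      set Rb : ℝ := Real.sqrt (b^2+x^2)
      have hDb : 0 < b + Rb := by linarith
      have hνS : ν*S0 ≤ S1 := by nlinarith [hrec, mul_pos hy hS2]
      have key2 : S0 * Rb ≤ 2*S1 - b*S0 := by
        have hbS0 : b*S0 = ν*S0 - S0/2 := by rw [hbdef]; ring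
        have hpos2 : 0 < 2*S1 - b*S0 := by
          nlinarith [hνS, hS0, mul_pos (show (0:ℝ) < ν by linarith) hS0, hbS0]
        have h1 : S1*S1 = (ν*S0 + y*S2)*S1 := by rw [← hrec]
        have hsq : (S0*Rb)^2 ≤ (2*S1 - b*S0)^2 := by
          rw [mul_pow, hRbsq]
          have hb4 : 4*(b*(S1*S0)) = 4*(ν*(S1*S0)) - 2*(S1*S0) := by rw [hbdef]; ring
          have hx2 : S0^2 * x^2 = 4*(y*S0^2) := by rw [hxy]; ring
          nlinarith [hII, h1, hb4, hx2]
        nlinarith [hsq, hpos2, mul_nonneg hS0.le hRb]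
      rw [div_le_div_iff₀ hS1 hDb]
      nlinarith [mul_le_mul_of_nonneg_left key2 hq.le]

theorem besselRatio_bounds (ν x : ℝ) (hν : 1 / 2 < ν) (hx : 0 ≤ x) :
    x / (ν + Real.sqrt (ν ^ 2 + x ^ 2)) ≤ besselRatio ν x ∧
      besselRatio ν x ≤ x / ((2 * ν - 1) / 2 + Real.sqrt ((2 * ν - 1) ^ 2 / 4 + x ^ 2)) := by
  have h := besselRatio_bounds' ν x hν hx
  rw [besselRatio]
  exact h
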